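/- Let K be a field with char K ∉ {2,3} and f ∈ K[z] a cubic polynomial whose two finite critical points γ_1, γ_2 ∈ K̄ collide at the ℓ-th iterate for some ℓ ≥ 2 (i.e. f^ℓ(γ_1) = f^ℓ(γ_2) but f^{ℓ−1}(γ_1) ≠ f^{ℓ−1}(γ_2)). Then the common value f^ℓ(γ_1) = f^ℓ(γ_2) lies in K. -/

import Mathlib

open Polynomial

/-- Let `K` be a field with `char K ∉ {2,3}` and `f ∈ K[z]` a
cubic polynomial whose two finite critical points `γ₁, γ₂` (the roots of `f'`
in an algebraic closure) collide at the `ℓ`-th iterate for some `ℓ ≥ 2`, i.e.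
`f^ℓ(γ₁) = f^ℓ(γ₂)` but `f^{ℓ-1}(γ₁) ≠ f^{ℓ-1}(γ₂)`. Then the common value
`f^ℓ(γ₁) = f^ℓ(γ₂)` is `K`-rational. -/
theorem critical_value_rational {K : Type*} [Field K]
    (h2 : (2 : K) ≠ 0) (h3 : (3 : K) ≠ 0)
    (f : Polynomial K) (hdeg : f.natDegree = 3)
    (γ₁ γ₂ a : AlgebraicClosure K) (ha : a ≠ 0)
    (hder : (derivative f).map (algebraMap K (AlgebraicClosure K)) =
      C a * (X - C γ₁) * (X - C γ₂))
    (ℓ : ℕ) (hℓ : 2 ≤ ℓ)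
    (hcol : (fun x => aeval x f)^[ℓ] γ₁ = (fun x => aeval x f)^[ℓ] γ₂)
    (hncol : (fun x => aeval x f)^[ℓ - 1] γ₁ ≠ (fun x => aeval x f)^[ℓ - 1] γ₂) :
    ∃ b : K, algebraMap K (AlgebraicClosure K) b = (fun x => aeval x f)^[ℓ] γ₁ := by
  classical
  set φ : AlgebraicClosure K → AlgebraicClosure K := fun x => aeval x f with hφ
  set v : AlgebraicClosure K := φ^[ℓ] γ₁ with hv
  have hne : γ₁ ≠ γ₂ := fun h => hncol (by rw [h])
  -- derivative of f is separable over K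
  have hsepg : (derivative f).Separable := by
    rw [← Polynomial.separable_map (algebraMap K (AlgebraicClosure K)), hder, mul_assoc]
    exact Separable.unit_mul (isUnit_C.mpr ha.isUnit)
      ((separable_X_sub_C).mul separable_X_sub_C
        (isCoprime_X_sub_C_of_isUnit_sub (sub_ne_zero.2 hne).isUnit))
  -- γ₁ is a root of derivative f
  have hroot : aeval γ₁ (derivative f) = 0 := by
    rw [aeval_def, ← eval_map, hder]
    simp
  have hsγ : IsSeparable K γ₁ := hsepg.of_dvd (minpoly.dvd K γ₁ hroot)
  -- v is separable over K
  have hmem : ∀ n, φ^[n] γ₁ ∈ separableClosure K (AlgebraicClosure K) := by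
    intro n
    induction n with
    | zero => exact mem_separableClosure_iff.2 hsγ
    | succ n ih =>
        rw [Function.iterate_succ_apply']
        exact Algebra.adjoin_le
          (show {φ^[n] γ₁} ⊆
              ((separableClosure K (AlgebraicClosure K)).toSubalgebra :
                Set (AlgebraicClosure K)) by simpa using ih)
          (Polynomial.aeval_mem_adjoin_singleton K _)
  have hsv : IsSeparable K v := mem_separableClosure_iff.1 (hmem ℓ)
  -- every K-automorphism fixes v
  have hfix : ∀ σ : AlgebraicClosure K ≃ₐ[K] AlgebraicClosure K, σ v = v := by
    intro σ
    have hsc : Function.Semiconj σ φ φ := fun x =>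
      (Polynomial.aeval_algHom_apply (σ : AlgebraicClosure K →ₐ[K] AlgebraicClosure K)
        x f).symm
    have hiter : σ (φ^[ℓ] γ₁) = φ^[ℓ] (σ γ₁) := (hsc.iterate_right ℓ) γ₁
    have hσroot : aeval (σ γ₁) (derivative f) = 0 := by
      have h1 := Polynomial.aeval_algHom_apply
        (σ : AlgebraicClosure K →ₐ[K] AlgebraicClosure K) γ₁ (derivative f)
      simpa [hroot] using h1
    have hcases : σ γ₁ = γ₁ ∨ σ γ₁ = γ₂ := by
      have h0 : (a = 0 ∨ σ γ₁ - γ₁ = 0) ∨ σ γ₁ - γ₂ = 0 := by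
        have h1 := hσroot
        rw [aeval_def, ← eval_map, hder] at h1
        simpa [mul_eq_zero] using h1
      rcases h0 with h | h
      · rcases h with h | h
        · exact absurd h ha
        · exact Or.inl (sub_eq_zero.1 h)
      · exact Or.inr (sub_eq_zero.1 h)
    rcases hcases with h | h
    · rw [hv, hiter, h]
    · rw [hv, hiter, h, ← hcol]
  -- conclude v ∈ K
  have hint : IsAlgebraic K v := Algebra.IsAlgebraic.isAlgebraic v
  have hm0 : minpoly K v ≠ 0 := minpoly.ne_zero hint.isIntegral
  have hsplit : Splits ((minpoly K v).map (algebraMap K (AlgebraicClosure K))) :=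
    IsAlgClosed.splits ((minpoly K v).map (algebraMap K (AlgebraicClosure K)))
  have huniq : ∀ y ∈ (minpoly K v).rootSet (AlgebraicClosure K), y = v := by
    intro y hy
    have hy0 : aeval y (minpoly K v) = 0 := (mem_rootSet.1 hy).2
    obtain ⟨σ, hσ⟩ := minpoly.exists_algEquiv_of_root (K := K)
      (L := AlgebraicClosure K) hint hy0
    have h1 : σ.symm (σ y) = σ.symm v := by rw [hσ]
    rw [σ.symm_apply_apply] at h1
    rw [h1]
    exact hfix σ.symm
  have hvmem : v ∈ (minpoly K v).rootSet (AlgebraicClosure K) :=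
    mem_rootSet.2 ⟨hm0, minpoly.aeval K v⟩
  have hcard : Fintype.card ((minpoly K v).rootSet (AlgebraicClosure K)) = 1 :=
    Fintype.card_eq_one_iff.2 ⟨⟨v, hvmem⟩, fun y => Subtype.ext (huniq y.1 y.2)⟩
  have hdeg1 : (minpoly K v).natDegree = 1 := by
    rw [← card_rootSet_eq_natDegree hsv hsplit, hcard]
  obtain ⟨b, hb⟩ := minpoly.natDegree_eq_one_iff.1 hdeg1
  exact ⟨b, hb⟩
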